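/- Let G be a locally finite, connected graph and k ∈ ℕ. Then every tight separation of G of finite order is crossed by only finitely many tight separations of G of order at most k. -/

import Mathlib

namespace LS

open SimpleGraph

variable {V : Type*}

/-- `(A, B)` is an (oriented) separation of `G`: the two sides cover `V`
and there is no edge between `A ∖ B` and `B ∖ A`. -/
def IsSep (G : SimpleGraph V) (A B : Set V) : Prop :=
  A ∪ B = Set.univ ∧ ∀ a ∈ A \ B, ∀ b ∈ B \ A, ¬G.Adj a b

/-- `(A,B) ≥ (C,D)` for oriented separations, i.e. `A ⊆ C` and `B ⊇ D`. -/
def SepGE (s t : Set V × Set V) : Prop := s.1 ⊆ t.1 ∧ t.2 ⊆ s.2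

/-- Two (unoriented) separations are nested if they have `≥`-comparable orientations. -/
def Nested (s t : Set V × Set V) : Prop :=
  SepGE s t ∨ SepGE s (t.2, t.1) ∨ SepGE (s.2, s.1) t ∨ SepGE (s.2, s.1) (t.2, t.1)

/-- Two separations cross if they are not nested. -/
def Crosses (s t : Set V × Set V) : Prop := ¬Nested s t

/-- The neighbourhood `N_G(K)` of a vertex set `K`. -/
def nbhdSet (G : SimpleGraph V) (K : Set V) : Set V :=
  {v | v ∉ K ∧ ∃ u ∈ K, G.Adj u v}

/-- `K` is (the vertex set of) a connected component of the subgraph of `G` induced on `S`. -/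
def IsCompOf (G : SimpleGraph V) (K S : Set V) : Prop :=
  K.Nonempty ∧ K ⊆ S ∧ (G.induce K).Connected ∧ ∀ a ∈ K, ∀ b ∈ S, G.Adj a b → b ∈ K

/-- `K` is a component of `G − X` that is tight at `X`, i.e. `N_G(K) = X`. -/
def TightCompAt (G : SimpleGraph V) (K X : Set V) : Prop :=
  IsCompOf G K Xᶜ ∧ nbhdSet G K = X

/-- A separation `{A,B}` is tight if `G − (A ∩ B)` has tight components
contained in `A` and in `B`, respectively. -/
def TightSep (G : SimpleGraph V) (A B : Set V) : Prop :=
  (∃ K, TightCompAt G K (A ∩ B) ∧ K ⊆ A) ∧ ∃ K, TightCompAt G K (A ∩ B) ∧ K ⊆ B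

/-- `X` is a tight separator: `G − X` has at least two components tight at `X`. -/
def TightSeparator (G : SimpleGraph V) (X : Set V) : Prop :=
  ∃ K₁ K₂, K₁ ≠ K₂ ∧ TightCompAt G K₁ X ∧ TightCompAt G K₂ X

/-- The set `E_G(S,T)` of edges of `G` with one end in `S` and the other in `T`. -/
def edgesBetween (G : SimpleGraph V) (S T : Set V) : Set (Sym2 V) :=
  {e | ∃ u v, G.Adj u v ∧ e = s(u, v) ∧ u ∈ S ∧ v ∈ T}

/-- `∂X`: the set of edges of `G` with exactly one end in `X`. -/
def edgeBdry (G : SimpleGraph V) (X : Set V) : Set (Sym2 V) :=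
  {e | ∃ u v, G.Adj u v ∧ e = s(u, v) ∧ u ∈ X ∧ v ∉ X}

/-- The separator of an oriented separation. -/
def tsSep (s : Set V × Set V) : Set V := s.1 ∩ s.2

/-- `p` lists the three distinct oriented separations of a ⊤-star. -/
def IsTStar (G : SimpleGraph V) (p : Fin 3 → Set V × Set V) : Prop :=
  Function.Injective p ∧ (∀ i, IsSep G (p i).1 (p i).2) ∧
  (∀ i j, i ≠ j → Disjoint ((p i).1 \ (p i).2) ((p j).1 \ (p j).2)) ∧
  (⋃ i, ((p i).1 \ (p i).2)) = (⋃ i, tsSep (p i))ᶜ ∧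
  ∀ i, ∀ v ∈ tsSep (p i), ∃ j, j ≠ i ∧ v ∈ tsSep (p j)

/-- The centre `Z` of a ⊤-star. -/
def tsCentre (p : Fin 3 → Set V × Set V) : Set V := ⋂ i, tsSep (p i)

/-- The `ij`-link `X_{ij}` of a ⊤-star. -/
def tsLink (p : Fin 3 → Set V × Set V) (i j : Fin 3) : Set V :=
  (tsSep (p i) ∩ tsSep (p j)) \ tsCentre p

/-- The ⊤-star `p` is relevant with base `p 0`. -/
def RelevantTStar (G : SimpleGraph V) (p : Fin 3 → Set V × Set V) : Prop :=
  IsTStar G p ∧ TightSep G (p 0).1 (p 0).2 ∧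
  ∀ x ∈ tsLink p 1 2, ∀ i : Fin 3, i ≠ 0 →
    (∃ y ∈ tsLink p 0 i, G.Adj x y) ∨
    ∃ y ∈ tsLink p 0 i ∪ tsCentre p, ∃ K, IsCompOf G K ((p i).1 \ (p i).2) ∧
      x ∈ nbhdSet G K ∧ y ∈ nbhdSet G K

/-- A bottleneck of order `k` in `G`, encoded as a set of oriented separations
closed under reversal (representing a set of unoriented separations). -/
def IsBottleneck (G : SimpleGraph V) (k : ℕ) (β : Set (Set V × Set V)) : Prop :=
  β.Nonempty ∧ (∀ s ∈ β, (s.2, s.1) ∈ β) ∧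
  (∀ s ∈ β, IsSep G s.1 s.2 ∧ TightSep G s.1 s.2 ∧ (s.1 ∩ s.2).encard = k) ∧
  ∀ p : Fin 3 → Set V × Set V, RelevantTStar G p →
    (∀ i, (tsSep (p i)).encard ≤ (k : ℕ∞)) → p 0 ∈ β → p 1 ∈ β ∨ p 2 ∈ β

/-! ### Tangles -/

/-- A tangle of order `ℓ` in `G`. -/
def IsTangle (G : SimpleGraph V) (ℓ : ℕ) (τ : Set (Set V × Set V)) : Prop :=
  (∀ s ∈ τ, IsSep G s.1 s.2 ∧ (s.1 ∩ s.2).encard < (ℓ : ℕ∞)) ∧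
  (∀ A B : Set V, IsSep G A B → (A ∩ B).encard < (ℓ : ℕ∞) → ((A, B) ∈ τ ∨ (B, A) ∈ τ)) ∧
  (∀ A B : Set V, (A, B) ∈ τ → (B, A) ∈ τ → A = B) ∧
  ∀ s₁ ∈ τ, ∀ s₂ ∈ τ, ∀ s₃ ∈ τ,
    ¬(s₁.1 ∪ s₂.1 ∪ s₃.1 = Set.univ ∧
      ∀ u v : V, G.Adj u v →
        (u ∈ s₁.1 ∧ v ∈ s₁.1) ∨ (u ∈ s₂.1 ∧ v ∈ s₂.1) ∨ (u ∈ s₃.1 ∧ v ∈ s₃.1))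

/-- The separation `{A,B}` distinguishes the tangles `τ` and `τ'`. -/
def DistinguishesT (τ τ' : Set (Set V × Set V)) (A B : Set V) : Prop :=
  ((A, B) ∈ τ ∧ (B, A) ∈ τ') ∨ ((B, A) ∈ τ ∧ (A, B) ∈ τ')

/-- The separation `{A,B}` distinguishes the vertex sets `Y` and `Z`. -/
def DistSets (Y Z A B : Set V) : Prop :=
  (Y ⊆ A ∧ (Y ∩ (A \ B)).Nonempty ∧ Z ⊆ B ∧ (Z ∩ (B \ A)).Nonempty) ∨
  (Y ⊆ B ∧ (Y ∩ (B \ A)).Nonempty ∧ Z ⊆ A ∧ (Z ∩ (A \ B)).Nonempty)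

/-! ### The construction of the nested sets `N^k(G)` -/

/-- `X^k`: the union of all `k`-bottlenecks in `G`. -/
def Xk (G : SimpleGraph V) (k : ℕ) : Set (Set V × Set V) :=
  {s | ∃ β, IsBottleneck G k β ∧ s ∈ β}

/-- `x^k(s)`: the number of separations in `X^k` that `s` crosses. -/
noncomputable def xk (G : SimpleGraph V) (k : ℕ) (s : Set V × Set V) : ℕ :=
  {t ∈ Xk G k | Crosses s t}.ncard

/-- `N^k(G,β)` relative to a previously constructed set `M` of separations:
the elements of `β` nested with `M` that minimise `x^k` among those. -/
def NkOfBeta (G : SimpleGraph V) (M : Set (Set V × Set V)) (k : ℕ)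
    (β : Set (Set V × Set V)) : Set (Set V × Set V) :=
  {s ∈ β | (∀ t ∈ M, Nested s t) ∧
    ∀ s' ∈ β, (∀ t ∈ M, Nested s' t) → xk G k s ≤ xk G k s'}

/-- `N^k(G)` relative to a previously constructed set `M`. -/
def NkStep (G : SimpleGraph V) (M : Set (Set V × Set V)) (k : ℕ) :
    Set (Set V × Set V) :=
  {s | ∃ β, IsBottleneck G k β ∧ s ∈ NkOfBeta G M k β}

/-- `N^{<k}(G) = ⋃_{j<k} N^j(G)`. -/
noncomputable def Nlt (G : SimpleGraph V) : ℕ → Set (Set V × Set V)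
  | 0 => ∅
  | k + 1 => Nlt G k ∪ NkStep G (Nlt G k) k

/-- `N^k(G)`. -/
noncomputable def Nk (G : SimpleGraph V) (k : ℕ) : Set (Set V × Set V) :=
  NkStep G (Nlt G k) k

/-- `N(G) = ⋃_k N^k(G)`. -/
noncomputable def NSet (G : SimpleGraph V) : Set (Set V × Set V) :=
  ⋃ k, Nk G k

/-! ### Walks, local components and local separations -/

/-- An `X`-walk: a walk having precisely its first and last vertex in `X`. -/
def IsXWalk (G : SimpleGraph V) (X : Set V) {u v : V} (W : G.Walk u v) : Prop :=
  u ∈ X ∧ v ∈ X ∧ ∀ w ∈ W.support, w ∈ X → w = u ∨ w = v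

/-- An `r`-local `X`-walk: an `X`-walk contained in a cycle of length `≤ r`,
or an `X`-walk consisting of a single `X`-edge. -/
def IsLocalXWalk (G : SimpleGraph V) (r : ℕ) (X : Set V) {u v : V} (W : G.Walk u v) :
    Prop :=
  IsXWalk G X W ∧
  ((∃ (a : V) (C : G.Walk a a), C.IsCycle ∧ C.length ≤ r ∧ ∀ e ∈ W.edges, e ∈ C.edges) ∨
    W.length = 1)

/-- An `r`-local `X`-path. -/
def IsLocalXPath (G : SimpleGraph V) (r : ℕ) (X : Set V) {u v : V} (W : G.Walk u v) :
    Prop :=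
  IsLocalXWalk G r X W ∧ W.IsPath

/-- Walks that are concatenations of `r`-local `X`-paths. -/
inductive ConcatLocalPaths (G : SimpleGraph V) (r : ℕ) (X : Set V) :
    ∀ {u v : V}, G.Walk u v → Prop
  | single {u v : V} (W : G.Walk u v) (h : IsLocalXPath G r X W) :
      ConcatLocalPaths G r X W
  | comp {u v w : V} (W₁ : G.Walk u v) (W₂ : G.Walk v w)
      (h₁ : IsLocalXPath G r X W₁) (h₂ : ConcatLocalPaths G r X W₂) :
      ConcatLocalPaths G r X (W₁.append W₂)

/-- `W ∈ W_r(X)`: `W` is a concatenation of `r`-local `X`-paths repeating no vertex of `X`. -/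
def MemWr (G : SimpleGraph V) (r : ℕ) (X : Set V) {u v : V} (W : G.Walk u v) : Prop :=
  ConcatLocalPaths G r X W ∧ ∀ x ∈ X, ¬W.support.Duplicate x

/-- `X` is `r`-tomic: any two of its vertices are joined by a walk in `W_r(X)`. -/
def Rtomic (G : SimpleGraph V) (r : ℕ) (X : Set V) : Prop :=
  ∀ x ∈ X, ∀ y ∈ X, x ≠ y → ∃ W : G.Walk x y, MemWr G r X W

/-- One step of the relation generating the `r`-local components at `X`:
`e = f`, or `e` and `f` are the first and last edges of an `r`-local `X`-walk
(both required to lie in `∂X`). -/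
def LocalEdgeStep (G : SimpleGraph V) (r : ℕ) (X : Set V) (e f : Sym2 V) : Prop :=
  e ∈ edgeBdry G X ∧ f ∈ edgeBdry G X ∧
  (e = f ∨ ∃ (u v : V) (W : G.Walk u v), IsLocalXWalk G r X W ∧
      W.edges.head? = some e ∧ W.edges.getLast? = some f)

/-- `F` is an `r`-local component at `X`: an equivalence class of the transitive
closure of `LocalEdgeStep` on `∂X`. -/
def LocalCompAt (G : SimpleGraph V) (r : ℕ) (X : Set V) (F : Set (Sym2 V)) : Prop :=
  ∃ e ∈ edgeBdry G X, F = {f | Relation.ReflTransGen (LocalEdgeStep G r X) e f}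

/-- An edge set `F` is tight with respect to `X` if every vertex of `X`
is incident with an edge of `F`. -/
def TightLocalComp (X : Set V) (F : Set (Sym2 V)) : Prop :=
  ∀ x ∈ X, ∃ e ∈ F, x ∈ e

/-- `X` is a tight `r`-local separator: at least two tight `r`-local components at `X`. -/
def TightLocalSeparator (G : SimpleGraph V) (r : ℕ) (X : Set V) : Prop :=
  ∃ F₁ F₂, F₁ ≠ F₂ ∧ LocalCompAt G r X F₁ ∧ LocalCompAt G r X F₂ ∧
    TightLocalComp X F₁ ∧ TightLocalComp X F₂

/-- `(E₁, X, E₂)` is an (oriented) `r`-local separation of `G`. -/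
def IsLocalSep (G : SimpleGraph V) (r : ℕ) (E₁ : Set (Sym2 V)) (X : Set V)
    (E₂ : Set (Sym2 V)) : Prop :=
  Disjoint E₁ E₂ ∧ E₁ ∪ E₂ = edgeBdry G X ∧
    ∀ F, LocalCompAt G r X F → F ⊆ E₁ ∨ F ⊆ E₂

/-- A tight `r`-local separation: each side includes a tight `r`-local component at `X`. -/
def TightLocalSep (G : SimpleGraph V) (r : ℕ) (E₁ : Set (Sym2 V)) (X : Set V)
    (E₂ : Set (Sym2 V)) : Prop :=
  IsLocalSep G r E₁ X E₂ ∧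
  (∃ F, LocalCompAt G r X F ∧ TightLocalComp X F ∧ F ⊆ E₁) ∧
  ∃ F, LocalCompAt G r X F ∧ TightLocalComp X F ∧ F ⊆ E₂

/-- The oriented `r`-local separation `s_r` induced by the oriented separation
`s = (A₁, A₂)`: its separator is `X = A₁ ∩ A₂`, and its sides are
`E_i = E_G(A_i ∖ X, X)`. -/
def inducedLocal (G : SimpleGraph V) (s : Set V × Set V) :
    Set (Sym2 V) × Set V × Set (Sym2 V) :=
  (edgesBetween G (s.1 \ (s.1 ∩ s.2)) (s.1 ∩ s.2), s.1 ∩ s.2,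
    edgesBetween G (s.2 \ (s.1 ∩ s.2)) (s.1 ∩ s.2))

/-- Some cycle of `G` of length `≤ r` alternates between the disjoint sets `X` and `Y`:
it visits four distinct vertices `x, y, x', y'` in this cyclic order with
`x, x' ∈ X` and `y, y' ∈ Y`. -/
def Alternates (G : SimpleGraph V) (r : ℕ) (X Y : Set V) : Prop :=
  ∃ (a : V) (C : G.Walk a a), C.IsCycle ∧ C.length ≤ r ∧
    ∃ (x y x' y' : V) (l₁ l₂ l₃ l₄ l₅ : List V),
      x ∈ X ∧ x' ∈ X ∧ y ∈ Y ∧ y' ∈ Y ∧ x ≠ x' ∧ y ≠ y' ∧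
      C.support = l₁ ++ x :: l₂ ++ y :: l₃ ++ x' :: l₄ ++ y' :: l₅

/-- `X` and `Y` are `r`-coupled. -/
def RCoupled (G : SimpleGraph V) (r : ℕ) (X Y : Set V) : Prop :=
  (X ∩ Y).Nonempty ∨ (Disjoint X Y ∧ Alternates G r X Y)

/-- The `X`-link for the side `Fi` of an `r`-local separation with separator `Y`:
vertices `x ∈ X ∖ Y` from which some walk in `W_r(X)` visits `Y` with its first
edge in `∂Y` lying in `Fi`. -/
def LocalLink (G : SimpleGraph V) (r : ℕ) (X Y : Set V) (Fi : Set (Sym2 V)) : Set V :=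
  {x | x ∈ X \ Y ∧ ∃ (z : V) (W : G.Walk x z), MemWr G r X W ∧
      (∃ y ∈ Y, y ∈ W.support) ∧
      ∃ (e : Sym2 V) (l₁ l₂ : List (Sym2 V)), W.edges = l₁ ++ e :: l₂ ∧
        e ∈ edgeBdry G Y ∧ e ∈ Fi ∧ ∀ e' ∈ l₁, e' ∉ edgeBdry G Y}

/-- The `r`-local separations `{E₁,X,E₂}` and `{F₁,Y,F₂}` cross. -/
def LocalCrosses (G : SimpleGraph V) (r : ℕ) (E₁ : Set (Sym2 V)) (X : Set V)
    (E₂ : Set (Sym2 V)) (F₁ : Set (Sym2 V)) (Y : Set V) (F₂ : Set (Sym2 V)) : Prop :=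
  RCoupled G r X Y ∧ ∀ i j : Bool,
    (LocalLink G r X Y (cond j F₁ F₂)).Nonempty ∨
    (LocalLink G r Y X (cond i E₁ E₂)).Nonempty ∨
    ((cond i E₁ E₂) ∩ (cond j F₁ F₂) ∩ edgeBdry G (X ∩ Y)).Nonempty

/-- The edge set of a walk, as a set. -/
def walkEdgeSet {G : SimpleGraph V} {a b : V} (W : G.Walk a b) : Set (Sym2 V) :=
  {e | e ∈ W.edges}

/-- The binary cycle space of `G` is generated by the cycles of length `≤ r`:
the edge set of every cycle is a symmetric difference of edge sets of cycles
of length `≤ r`. -/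
def CycleSpaceGenShort (G : SimpleGraph V) (r : ℕ) : Prop :=
  ∀ ⦃a : V⦄ (C : G.Walk a a), C.IsCycle →
    ∃ L : List ((b : V) × G.Walk b b),
      (∀ p ∈ L, p.2.IsCycle ∧ p.2.length ≤ r) ∧
      walkEdgeSet C = L.foldr (fun p E => symmDiff (walkEdgeSet p.2) E) ∅

/-! ### Local ⊤-stars and local bottlenecks -/

/-- `q` lists the three oriented `r`-local separations of an `r`-local ⊤-star. -/
def IsLocalTStar (G : SimpleGraph V) (r : ℕ)
    (q : Fin 3 → Set (Sym2 V) × Set V × Set (Sym2 V)) : Prop :=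
  Function.Injective q ∧
  (∀ i, IsLocalSep G r (q i).1 (q i).2.1 (q i).2.2) ∧
  (∀ i j, i ≠ j → Disjoint (q i).1 (q j).1) ∧
  (⋃ i, (q i).1) = edgeBdry G (⋃ i, (q i).2.1) ∧
  (∀ i, ∀ v ∈ (q i).2.1, ∃ j, j ≠ i ∧ v ∈ (q j).2.1) ∧
  ∀ F, LocalCompAt G r (⋃ i, (q i).2.1) F → ∃ i, F ⊆ (q i).1

/-- The `r`-local ⊤-star `q` is relevant with base `q 0`. -/
def RelevantLocalTStar (G : SimpleGraph V) (r : ℕ)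
    (q : Fin 3 → Set (Sym2 V) × Set V × Set (Sym2 V)) : Prop :=
  IsLocalTStar G r q ∧ TightLocalSep G r (q 0).1 (q 0).2.1 (q 0).2.2 ∧
  ∀ x ∈ ((q 1).2.1 ∩ (q 2).2.1) \ ⋂ j, (q j).2.1, ∀ i : Fin 3, i ≠ 0 →
    (∃ y ∈ ((q 0).2.1 ∩ (q i).2.1) \ ⋂ j, (q j).2.1, G.Adj x y) ∨
    ∃ F, LocalCompAt G r (⋃ j, (q j).2.1) F ∧ F ⊆ (q i).1 ∧
      (∃ e ∈ F, x ∈ e) ∧ ∃ e ∈ F, ∃ y ∈ (q 0).2.1 ∩ (q i).2.1, y ∈ e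

/-- An `r`-local bottleneck of order `k` in `G`, encoded as a set of oriented
`r`-local separations closed under reversal. -/
def IsLocalBottleneck (G : SimpleGraph V) (r k : ℕ)
    (β : Set (Set (Sym2 V) × Set V × Set (Sym2 V))) : Prop :=
  β.Nonempty ∧ (∀ q ∈ β, (q.2.2, q.2.1, q.1) ∈ β) ∧
  (∀ q ∈ β, TightLocalSep G r q.1 q.2.1 q.2.2 ∧ q.2.1.encard = (k : ℕ∞)) ∧
  ∀ p : Fin 3 → Set (Sym2 V) × Set V × Set (Sym2 V), RelevantLocalTStar G r p →
    (∀ i, ((p i).2.1).encard ≤ (k : ℕ∞)) → p 0 ∈ β → p 1 ∈ β ∨ p 2 ∈ β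

/-! ### Auxiliary lemmas for Statement 5 -/

section Statement5Aux

open Filter

variable {V : Type*} {G : SimpleGraph V}

/-- First exit lemma: a walk from a vertex satisfying `P` to one not satisfying `P`
contains an edge leaving `P`. -/
lemma exit_lemma (P : V → Prop) {u v : V} (W : G.Walk u v) (hu : P u) (hv : ¬ P v) :
    ∃ p q, G.Adj p q ∧ P p ∧ ¬ P q ∧ p ∈ W.support ∧ q ∈ W.support := by
  induction W with
  | nil => exact absurd hu hv
  | @cons a b c h W ih =>
    by_cases hb : P b
    · obtain ⟨p, q, h1, h2, h3, h4, h5⟩ := ih hb hv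
      exact ⟨p, q, h1, h2, h3, by simp [SimpleGraph.Walk.support_cons, h4],
        by simp [SimpleGraph.Walk.support_cons, h5]⟩
    · exact ⟨a, b, h, hu, hb, (SimpleGraph.Walk.cons h W).start_mem_support,
        by simp [SimpleGraph.Walk.support_cons, W.start_mem_support]⟩

lemma mem_side {A B : Set V} (hAB : IsSep G A B) {v : V} (hv : v ∉ A ∩ B) :
    v ∈ A \ B ∨ v ∈ B \ A := by
  have hv' : v ∈ A ∪ B := by rw [hAB.1]; trivial
  rcases hv' with h | h
  · exact Or.inl ⟨h, fun hB => hv ⟨h, hB⟩⟩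
  · exact Or.inr ⟨h, fun hA => hv ⟨hA, h⟩⟩

/-- A walk avoiding the separator stays on one side. -/
lemma walk_side {A B : Set V} (hAB : IsSep G A B) {u v : V} (W : G.Walk u v)
    (hsup : ∀ w ∈ W.support, w ∉ A ∩ B) (hu : u ∈ A \ B) : v ∈ A \ B := by
  by_contra hv
  obtain ⟨p, q, hadj, hp, hq, hps, hqs⟩ := exit_lemma (· ∈ A \ B) W hu hv
  rcases mem_side hAB (hsup q hqs) with h | h
  · exact hq h
  · exact hAB.2 p hp q h hadj

lemma sep_symm {A B : Set V} (h : IsSep G A B) : IsSep G B A :=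
  ⟨by rw [Set.union_comm]; exact h.1, fun a ha b hb hadj => h.2 b hb a ha hadj.symm⟩

/-- A walk avoiding `X` starting in a component of `G − X` stays in it. -/
lemma comp_walk {K X : Set V} (hcl : ∀ a ∈ K, ∀ b ∈ Xᶜ, G.Adj a b → b ∈ K) :
    ∀ {u v : V} (W : G.Walk u v), (∀ w ∈ W.support, w ∉ X) → u ∈ K → v ∈ K := by
  intro u v W
  induction W with
  | nil => exact fun _ h => h
  | @cons a b c h W ih =>
    intro hsup ha
    refine ih (fun w hw => hsup w (by simp [SimpleGraph.Walk.support_cons, hw])) ?_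
    exact hcl a ha b (hsup b (by simp [SimpleGraph.Walk.support_cons, W.start_mem_support])) h

lemma induce_walk {K : Set V} : ∀ {x y : ↥K} (_ : (G.induce K).Walk x y),
    ∃ W' : G.Walk x.1 y.1, ∀ w ∈ W'.support, w ∈ K := by
  intro x y W
  induction W with
  | nil => exact ⟨SimpleGraph.Walk.nil, by simp⟩
  | @cons a b c h W ih =>
    obtain ⟨W', hW'⟩ := ih
    refine ⟨SimpleGraph.Walk.cons h W', ?_⟩
    intro w hw
    have hw : w = a.1 ∨ w ∈ W'.support := List.mem_cons.mp hw
    rcases hw with hw | hw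
    · exact hw ▸ a.2
    · exact hW' w hw

lemma connected_walk {K : Set V} (hconn : (G.induce K).Connected) {a b : V}
    (ha : a ∈ K) (hb : b ∈ K) : ∃ W : G.Walk a b, ∀ w ∈ W.support, w ∈ K := by
  obtain ⟨W⟩ := hconn.preconnected ⟨a, ha⟩ ⟨b, hb⟩
  exact induce_walk W

/-- A connected set avoiding the separator lies in one side. -/
lemma comp_in_side {A B K : Set V} (hAB : IsSep G A B) (hne : K.Nonempty)
    (hconn : (G.induce K).Connected) (hdisj : ∀ w ∈ K, w ∉ A ∩ B) :
    K ⊆ A \ B ∨ K ⊆ B \ A := by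
  obtain ⟨u, hu⟩ := hne
  rcases mem_side hAB (hdisj u hu) with h | h
  · left; intro v hv
    obtain ⟨W, hW⟩ := connected_walk hconn hu hv
    exact walk_side hAB W (fun w hw => hdisj w (hW w hw)) h
  · right; intro v hv
    obtain ⟨W, hW⟩ := connected_walk hconn hu hv
    exact walk_side (sep_symm hAB) W
      (fun w hw hww => hdisj w (hW w hw) (Set.inter_comm A B ▸ hww)) h

lemma tightSep_sep_nonempty (hG : G.Connected) {A B : Set V} (ht : TightSep G A B) :
    (A ∩ B).Nonempty := by
  obtain ⟨⟨K, ⟨hKcomp, _⟩, hKA⟩, ⟨K', ⟨hK'comp, _⟩, hK'B⟩⟩ := ht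
  by_contra hS
  rw [Set.not_nonempty_iff_eq_empty] at hS
  obtain ⟨x, hx⟩ := hKcomp.1
  obtain ⟨x', hx'⟩ := hK'comp.1
  obtain ⟨W⟩ := hG.preconnected x x'
  have hx'K : x' ∈ K :=
    comp_walk hKcomp.2.2.2 W (fun w _ hw => by rw [hS] at hw; exact hw) hx
  have : x' ∈ A ∩ B := ⟨hKA hx'K, hK'B hx'⟩
  rw [hS] at this
  exact this

/-- Core of the nestedness lemma: if the tight component `T ⊆ D \ C` is on the `A`-side,
then `B ⊆ C` and `D ⊆ A`. -/
lemma one_side_core (hG : G.Connected) {A B C D T : Set V}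
    (hAB : IsSep G A B) (hCD : IsSep G C D)
    (hTD' : T ⊆ D \ C) (hTnb : nbhdSet G T = C ∩ D)
    (hS : (A ∩ B).Nonempty) (hdisj : ∀ w ∈ C ∩ D, w ∉ A ∩ B)
    (hsub : A ∩ B ⊆ C \ D) (hside : T ⊆ A \ B) :
    B ⊆ C ∧ D ⊆ A := by
  have hX : C ∩ D ⊆ A \ B := by
    intro x hx
    have hx' : x ∈ nbhdSet G T := hTnb.symm ▸ hx
    obtain ⟨hxT, u, huT, hadj⟩ := hx'
    rcases mem_side hAB (hdisj x hx) with h | h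
    · exact h
    · exact absurd hadj (hAB.2 u (hside huT) x h)
  have hDC : D \ C ⊆ A \ B := by
    intro d hd
    have hdS : d ∉ A ∩ B := fun h => (hsub h).2 hd.1
    rcases mem_side hAB hdS with h | h
    · exact h
    · exfalso
      obtain ⟨s0, hs0⟩ := hS
      obtain ⟨W⟩ := hG.preconnected d s0
      have hP : ¬ (s0 ∈ D \ C ∧ s0 ∈ B \ A) := fun hc => (hsub hs0).2 hc.1.1
      obtain ⟨p, q, hadj, hp, hq, _, _⟩ :=
        exit_lemma (fun w => w ∈ D \ C ∧ w ∈ B \ A) W ⟨hd, h⟩ hP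
      by_cases hqX : q ∈ C ∩ D
      · exact hAB.2 q (hX hqX) p hp.2 hadj.symm
      · rcases mem_side hCD hqX with h1 | h1
        · exact hCD.2 q h1 p hp.1 hadj.symm
        · have hq' : q ∉ B \ A := fun hb => hq ⟨h1, hb⟩
          have hqS : q ∉ A ∩ B := fun hs => (hsub hs).2 h1.1
          rcases mem_side hAB hqS with h2 | h2
          · exact hAB.2 q h2 p hp.2 hadj.symm
          · exact hq' h2
  constructor
  · intro b hb
    by_contra hbc
    have hbD : b ∈ D := by
      have : b ∈ C ∪ D := by rw [hCD.1]; trivial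
      rcases this with h | h
      · exact absurd h hbc
      · exact h
    exact (hDC ⟨hbD, hbc⟩).2 hb
  · intro d hd
    by_cases hc : d ∈ C
    · exact (hX ⟨hc, hd⟩).1
    · exact (hDC ⟨hd, hc⟩).1

/-- If the separators are disjoint and `A ∩ B` lies in the side `C \ D`,
then the separations are nested. -/
lemma nested_of_subset_side (hG : G.Connected) {A B C D : Set V}
    (hAB : IsSep G A B) (hCD : IsSep G C D)
    (hT2 : ∃ T, TightCompAt G T (C ∩ D) ∧ T ⊆ D)
    (hS : (A ∩ B).Nonempty) (hdisj : ∀ w ∈ C ∩ D, w ∉ A ∩ B)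
    (hsub : A ∩ B ⊆ C \ D) :
    Nested (A, B) (C, D) := by
  obtain ⟨T, ⟨hTcomp, hTnb⟩, hTD⟩ := hT2
  have hTD' : T ⊆ D \ C := fun t ht => ⟨hTD ht, fun hc => (hTcomp.2.1 ht) ⟨hc, hTD ht⟩⟩
  have hTS : ∀ w ∈ T, w ∉ A ∩ B := fun w hw hwS => (hsub hwS).2 (hTD' hw).1
  rcases comp_in_side hAB hTcomp.1 hTcomp.2.2.1 hTS with hside | hside
  · obtain ⟨h1, h2⟩ := one_side_core hG hAB hCD hTD' hTnb hS hdisj hsub hside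
    exact Or.inr (Or.inr (Or.inl ⟨h1, h2⟩))
  · obtain ⟨h1, h2⟩ := one_side_core hG (sep_symm hAB) hCD hTD' hTnb
      (by rwa [Set.inter_comm])
      (fun w hw hww => hdisj w hw (Set.inter_comm B A ▸ hww))
      (by rwa [Set.inter_comm]) hside
    exact Or.inl ⟨h1, h2⟩

lemma nested_comm_right {A B C D : Set V} (h : Nested (A, B) (D, C)) :
    Nested (A, B) (C, D) := by
  unfold Nested SepGE at h ⊢
  dsimp at h ⊢
  tauto

/-- Mirror version: if `A ∩ B` lies in the side `D \ C`. -/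
lemma nested_of_subset_side' (hG : G.Connected) {A B C D : Set V}
    (hAB : IsSep G A B) (hCD : IsSep G C D)
    (hT1 : ∃ T, TightCompAt G T (C ∩ D) ∧ T ⊆ C)
    (hS : (A ∩ B).Nonempty) (hdisj : ∀ w ∈ C ∩ D, w ∉ A ∩ B)
    (hsub : A ∩ B ⊆ D \ C) :
    Nested (A, B) (C, D) := by
  refine nested_comm_right (nested_of_subset_side hG hAB (sep_symm hCD) ?_ hS ?_ hsub)
  · obtain ⟨T, hT, hTC⟩ := hT1
    exact ⟨T, by rwa [Set.inter_comm], hTC⟩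
  · intro w hw
    exact hdisj w (Set.inter_comm D C ▸ hw)

/-- First-entry lemma: from any vertex outside a nonempty set `X` there is a walk
avoiding `X` to a vertex adjacent to `X`. -/
lemma exists_entry {X : Set V} (hX : X.Nonempty) (hG : G.Connected) {v : V} (hv : v ∉ X) :
    ∃ u x, G.Adj u x ∧ x ∈ X ∧ ∃ W : G.Walk v u, ∀ w ∈ W.support, w ∉ X := by
  obtain ⟨x0, hx0⟩ := hX
  obtain ⟨W⟩ := hG.preconnected v x0
  induction W with
  | nil => exact absurd hx0 hv
  | @cons a b c h W ih =>
    by_cases hb : b ∈ X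
    · exact ⟨a, b, h, hb, SimpleGraph.Walk.nil, by simpa using hv⟩
    · obtain ⟨u, x, h1, h2, W', h3⟩ := ih hb hx0
      refine ⟨u, x, h1, h2, SimpleGraph.Walk.cons h W', ?_⟩
      intro w hw
      simp only [SimpleGraph.Walk.support_cons, List.mem_cons] at hw
      rcases hw with hw | hw
      · exact hw ▸ hv
      · exact h3 w hw

lemma sep_snd_eq {C D X : Set V} (hCD : IsSep G C D) (hX : C ∩ D = X) :
    D = Cᶜ ∪ X := by
  ext w
  constructor
  · intro hw
    by_cases hc : w ∈ C
    · exact Or.inr (hX ▸ ⟨hc, hw⟩)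
    · exact Or.inl hc
  · intro hw
    rcases hw with hw | hw
    · have : w ∈ C ∪ D := by rw [hCD.1]; trivial
      rcases this with h | h
      · exact absurd h hw
      · exact h
    · exact (hX ▸ hw : w ∈ C ∩ D).2

/-- For a fixed finite nonempty separator, there are only finitely many separations
with that separator. -/
lemma fiber_finite (hG : G.Connected) (hlf : ∀ v : V, (G.neighborSet v).Finite)
    {X : Set V} (hXfin : X.Finite) (hXne : X.Nonempty) :
    {t : Set V × Set V | IsSep G t.1 t.2 ∧ t.1 ∩ t.2 = X}.Finite := by
  classical
  set E : Set V := {u | u ∉ X ∧ ∃ x ∈ X, G.Adj u x} with hE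
  have hEfin : E.Finite := by
    apply Set.Finite.subset (hXfin.biUnion (fun x _ => hlf x))
    rintro u ⟨_, x, hx, hadj⟩
    exact Set.mem_biUnion hx hadj.symm
  have key : ∀ C D C' D' : Set V, IsSep G C D → IsSep G C' D' → C ∩ D = X →
      C' ∩ D' = X → C ∩ E = C' ∩ E → C ⊆ C' := by
    intro C D C' D' hCD hC'D' hX1 hX2 hEE v hvC
    by_cases hvX : v ∈ X
    · rw [← hX2] at hvX; exact hvX.1
    · by_contra hvC'
      have hv1 : v ∈ C \ D := ⟨hvC, fun hD => hvX (hX1 ▸ ⟨hvC, hD⟩)⟩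
      have hvD' : v ∈ D' := by
        have : v ∈ C' ∪ D' := by rw [hC'D'.1]; trivial
        rcases this with h | h
        · exact absurd h hvC'
        · exact h
      have hv2 : v ∈ D' \ C' := ⟨hvD', hvC'⟩
      obtain ⟨u, x, hadj, hxX, W, hW⟩ := exists_entry hXne hG hvX
      have hu1 : u ∈ C \ D := walk_side hCD W (fun w hw h => hW w hw (hX1 ▸ h)) hv1
      have hu2 : u ∈ D' \ C' := walk_side (sep_symm hC'D') W
        (fun w hw h => hW w hw (by rw [← hX2]; exact ⟨h.2, h.1⟩)) hv2
      have huE : u ∈ E := ⟨hW u W.end_mem_support, x, hxX, hadj⟩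
      have : u ∈ C' ∩ E := hEE ▸ (⟨hu1.1, huE⟩ : u ∈ C ∩ E)
      exact hu2.2 this.1
  apply Set.Finite.of_finite_image (f := fun t => t.1 ∩ E)
  · apply Set.Finite.subset hEfin.finite_subsets
    rintro s ⟨t, _, rfl⟩
    exact Set.inter_subset_right
  · rintro ⟨C, D⟩ ⟨hCD, hX1⟩ ⟨C', D'⟩ ⟨hC'D', hX2⟩ h
    have h' : C ∩ E = C' ∩ E := h
    have h1 : C = C' := Set.Subset.antisymm
      (key C D C' D' hCD hC'D' hX1 hX2 h') (key C' D' C D hC'D' hCD hX2 hX1 h'.symm)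
    have h2 : D = D' := by
      have e1 : D = Cᶜ ∪ X := sep_snd_eq (C := C) (D := D) hCD hX1
      have e2 : D' = C'ᶜ ∪ X := sep_snd_eq (C := C') (D := D') hC'D' hX2
      rw [e1, e2, h1]
    simp only [Prod.mk.injEq]
    exact ⟨h1, h2⟩

lemma ultra_pigeon {α β : Type*} (𝒰 : Ultrafilter α) {s : Set β} (hs : s.Finite)
    {g : α → β} (h : ∀ᶠ n in 𝒰, g n ∈ s) : ∃ v, ∀ᶠ n in 𝒰, g n = v := by
  by_contra hc
  push_neg at hc
  have h2 : ∀ᶠ n in (𝒰 : Filter α), ∀ v ∈ s, g n ≠ v := by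
    rw [Filter.eventually_all_finite hs]
    exact fun v _ => hc v
  obtain ⟨n, hn1, hn2⟩ := (h.and h2).exists
  exact hn2 (g n) hn1 rfl

/-- Key finiteness: the separators of tight separations of order at most `k`
crossing a fixed tight separation of finite order form a finite family. -/
lemma separators_finite {V : Type*} (G : SimpleGraph V)
    (hlf : ∀ v : V, (G.neighborSet v).Finite) (hG : G.Connected)
    (k : ℕ) (A B : Set V)
    (hAB : IsSep G A B) (ht : TightSep G A B) (hfin : (A ∩ B).Finite) :
    {X : Set V | ∃ C D : Set V, IsSep G C D ∧ TightSep G C D ∧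
      (C ∩ D).encard ≤ (k : ℕ∞) ∧ Crosses (A, B) (C, D) ∧ C ∩ D = X}.Finite := by
  classical
  by_contra hinf
  have hinf : {X : Set V | ∃ C D : Set V, IsSep G C D ∧ TightSep G C D ∧
      (C ∩ D).encard ≤ (k : ℕ∞) ∧ Crosses (A, B) (C, D) ∧ C ∩ D = X}.Infinite := hinf
  obtain e := hinf.natEmbedding
  set Xn : ℕ → Set V := fun n => (e n : Set V) with hXn
  have hXinj : Function.Injective Xn := fun m n h => e.injective (Subtype.ext h)
  have hXmem : ∀ n, ∃ C D : Set V, IsSep G C D ∧ TightSep G C D ∧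
      (C ∩ D).encard ≤ (k : ℕ∞) ∧ Crosses (A, B) (C, D) ∧ C ∩ D = Xn n :=
    fun n => (e n).2
  choose C D hsep htt hord hcross hXeq using hXmem
  have hT1 : ∀ n, ∃ T, TightCompAt G T (C n ∩ D n) ∧ T ⊆ C n := fun n => (htt n).1
  have hT2 : ∀ n, ∃ T, TightCompAt G T (C n ∩ D n) ∧ T ⊆ D n := fun n => (htt n).2
  choose T1 hT1c hT1s using hT1
  choose T2 hT2c hT2s using hT2
  have hT1side : ∀ n, T1 n ⊆ C n \ D n :=
    fun n t ht => ⟨hT1s n ht, fun hd => (hT1c n).1.2.1 ht ⟨hT1s n ht, hd⟩⟩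
  have hT2side : ∀ n, T2 n ⊆ D n \ C n :=
    fun n t ht => ⟨hT2s n ht, fun hc => (hT2c n).1.2.1 ht ⟨hc, hT2s n ht⟩⟩
  set 𝒰 : Ultrafilter ℕ := Filter.hyperfilter ℕ with h𝒰
  set Y : Set V := {w | ∀ᶠ n in (𝒰 : Filter ℕ), w ∈ Xn n} with hY
  have hYfin : Y.Finite := by
    by_contra hYinf
    obtain ⟨F, hFY, hFfin, hFcard⟩ :=
      Set.Infinite.exists_subset_ncard_eq (hYinf : Y.Infinite) (k + 1)
    have hev : ∀ᶠ n in (𝒰 : Filter ℕ), ∀ w ∈ F, w ∈ Xn n := by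
      rw [Filter.eventually_all_finite hFfin]
      exact fun w hw => hFY hw
    obtain ⟨n, hn⟩ := hev.exists
    have hsub : F ⊆ Xn n := hn
    have hle : F.encard ≤ (k : ℕ∞) := by
      calc F.encard ≤ (Xn n).encard := Set.encard_mono hsub
        _ = (C n ∩ D n).encard := by rw [hXeq n]
        _ ≤ (k : ℕ∞) := hord n
    rw [← hFfin.cast_ncard_eq, hFcard] at hle
    have : k + 1 ≤ k := by exact_mod_cast hle
    omega
  have hnotY : ∀ w, w ∉ Y → ∀ᶠ n in (𝒰 : Filter ℕ), w ∉ Xn n :=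
    fun w hw => Ultrafilter.eventually_not.2 hw
  have hYsub : ∀ᶠ n in (𝒰 : Filter ℕ), ∀ w ∈ Y, w ∈ Xn n := by
    rw [Filter.eventually_all_finite hYfin]
    exact fun w hw => hw
  have hne : ∀ᶠ n in (𝒰 : Filter ℕ), Xn n ≠ Y := by
    have hfinset : {n : ℕ | Xn n = Y}.Finite := by
      apply Set.Subsingleton.finite
      intro m hm n hn
      exact hXinj (hm.trans hn.symm)
    exact Filter.hyperfilter_le_cofinite hfinset.compl_mem_cofinite
  have hSne : (A ∩ B).Nonempty := tightSep_sep_nonempty hG ht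
  rcases Set.eq_empty_or_nonempty Y with hYe | hYne
  · -- Y = ∅ : use the crossing to split A ∩ B, then a fixed walk gives a contradiction
    have hSdisj : ∀ᶠ n in (𝒰 : Filter ℕ), ∀ w ∈ A ∩ B, w ∉ Xn n := by
      rw [Filter.eventually_all_finite hfin]
      exact fun w _ => hnotY w (by rw [hYe]; exact Set.notMem_empty w)
    have hex : ∀ᶠ n in (𝒰 : Filter ℕ), ∃ q : V × V,
        (q.1 ∈ A ∩ B ∧ q.1 ∈ D n \ C n) ∧ (q.2 ∈ A ∩ B ∧ q.2 ∈ C n \ D n) := by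
      filter_upwards [hSdisj] with n hn
      have hdisj : ∀ w ∈ C n ∩ D n, w ∉ A ∩ B :=
        fun w hw hwS => hn w hwS (hXeq n ▸ hw)
      have h1 : ¬ (A ∩ B ⊆ C n \ D n) := by
        intro hsub
        exact hcross n (nested_of_subset_side hG hAB (hsep n)
          ⟨T2 n, hT2c n, hT2s n⟩ hSne hdisj hsub)
      have h2 : ¬ (A ∩ B ⊆ D n \ C n) := by
        intro hsub
        exact hcross n (nested_of_subset_side' hG hAB (hsep n)
          ⟨T1 n, hT1c n, hT1s n⟩ hSne hdisj hsub)
      rw [Set.not_subset] at h1 h2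
      obtain ⟨s, hsS, hs⟩ := h1
      obtain ⟨s', hs'S, hs'⟩ := h2
      have hsX : s ∉ C n ∩ D n := fun h => hdisj s h hsS
      have hs'X : s' ∉ C n ∩ D n := fun h => hdisj s' h hs'S
      refine ⟨(s, s'), ⟨hsS, ?_⟩, ⟨hs'S, ?_⟩⟩
      · rcases mem_side (hsep n) hsX with h | h
        · exact absurd h hs
        · exact h
      · rcases mem_side (sep_symm (hsep n)) (fun h => hs'X ⟨h.2, h.1⟩) with h | h
        · exact absurd h hs'
        · exact h
    set p : ℕ → V × V := fun n =>
      if h : ∃ q : V × V, (q.1 ∈ A ∩ B ∧ q.1 ∈ D n \ C n) ∧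
          (q.2 ∈ A ∩ B ∧ q.2 ∈ C n \ D n) then h.choose
      else (hSne.choose, hSne.choose) with hp
    have hpspec : ∀ᶠ n in (𝒰 : Filter ℕ),
        ((p n).1 ∈ A ∩ B ∧ (p n).1 ∈ D n \ C n) ∧
        ((p n).2 ∈ A ∩ B ∧ (p n).2 ∈ C n \ D n) := by
      filter_upwards [hex] with n hn
      rw [hp]
      simp only [dif_pos hn]
      exact hn.choose_spec
    obtain ⟨q, hq⟩ := ultra_pigeon 𝒰 (hfin.prod hfin)
      (hpspec.mono fun n h => Set.mem_prod.2 ⟨h.1.1, h.2.1⟩)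
    obtain ⟨W⟩ := hG.preconnected q.2 q.1
    have hWav : ∀ᶠ n in (𝒰 : Filter ℕ), ∀ w ∈ {x | x ∈ W.support}, w ∉ Xn n := by
      rw [Filter.eventually_all_finite (W.support.finite_toSet)]
      exact fun w _ => hnotY w (by rw [hYe]; exact Set.notMem_empty w)
    obtain ⟨n, hn1, hn2, hn3⟩ := (hpspec.and (hq.and hWav)).exists
    rw [hn2] at hn1
    have hside : q.1 ∈ C n \ D n :=
      walk_side (hsep n) W (fun w hw h => hn3 w hw (hXeq n ▸ h)) hn1.2.2
    exact hn1.1.2.2 hside.1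
  · -- Y ≠ ∅ : pick y ∈ Y, pigeonhole its neighbours into the two tight components
    obtain ⟨y, hy⟩ := hYne
    have hyX : ∀ᶠ n in (𝒰 : Filter ℕ), y ∈ Xn n := hy
    have hmknb : ∀ n, y ∈ Xn n →
        (∃ u, u ∈ T1 n ∧ G.Adj u y) ∧ (∃ u, u ∈ T2 n ∧ G.Adj u y) := by
      intro n hn
      have h1 : y ∈ nbhdSet G (T1 n) := (hT1c n).2.symm ▸ (hXeq n ▸ hn : y ∈ C n ∩ D n)
      have h2 : y ∈ nbhdSet G (T2 n) := (hT2c n).2.symm ▸ (hXeq n ▸ hn : y ∈ C n ∩ D n)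
      obtain ⟨_, u1, hu1, hadj1⟩ := h1
      obtain ⟨_, u2, hu2, hadj2⟩ := h2
      exact ⟨⟨u1, hu1, hadj1⟩, ⟨u2, hu2, hadj2⟩⟩
    set a : ℕ → V := fun n =>
      if h : ∃ u, u ∈ T1 n ∧ G.Adj u y then h.choose else y with ha
    set b : ℕ → V := fun n =>
      if h : ∃ u, u ∈ T2 n ∧ G.Adj u y then h.choose else y with hb
    have haspec : ∀ᶠ n in (𝒰 : Filter ℕ), a n ∈ T1 n ∧ G.Adj (a n) y := by
      filter_upwards [hyX] with n hn
      have h := (hmknb n hn).1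
      rw [ha]; simp only [dif_pos h]; exact h.choose_spec
    have hbspec : ∀ᶠ n in (𝒰 : Filter ℕ), b n ∈ T2 n ∧ G.Adj (b n) y := by
      filter_upwards [hyX] with n hn
      have h := (hmknb n hn).2
      rw [hb]; simp only [dif_pos h]; exact h.choose_spec
    obtain ⟨av, hav⟩ := ultra_pigeon 𝒰 (hlf y) (haspec.mono fun n h => h.2.symm)
    obtain ⟨bv, hbv⟩ := ultra_pigeon 𝒰 (hlf y) (hbspec.mono fun n h => h.2.symm)
    have hmemT : ∀ᶠ n in (𝒰 : Filter ℕ), av ∈ T1 n ∧ bv ∈ T2 n := by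
      filter_upwards [haspec, hbspec, hav, hbv] with n h1 h2 h3 h4
      exact ⟨h3 ▸ h1.1, h4 ▸ h2.1⟩
    by_cases hreach : ∃ W : G.Walk av bv, ∀ w ∈ W.support, w ∉ Y
    · obtain ⟨W, hW⟩ := hreach
      have hWav : ∀ᶠ n in (𝒰 : Filter ℕ), ∀ w ∈ {x | x ∈ W.support}, w ∉ Xn n := by
        rw [Filter.eventually_all_finite (W.support.finite_toSet)]
        exact fun w hw => hnotY w (hW w hw)
      obtain ⟨n, hn1, hn2⟩ := (hmemT.and hWav).exists
      have hbv1 : bv ∈ T1 n :=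
        comp_walk (hT1c n).1.2.2.2 W (fun w hw h => hn2 w hw (hXeq n ▸ h)) hn1.1
      exact (hT2side n hn1.2).2 (hT1side n hbv1).1
    · obtain ⟨n, hn1, hn2, hn3⟩ := (hmemT.and (hYsub.and hne)).exists
      -- pick z ∈ Xn n \ Y
      have hzz : ∃ z, z ∈ Xn n ∧ z ∉ Y := by
        by_contra hzc
        push_neg at hzc
        exact hn3 (Set.Subset.antisymm hzc hn2)
      obtain ⟨z, hzX, hzY⟩ := hzz
      have hz1 : z ∈ nbhdSet G (T1 n) := (hT1c n).2.symm ▸ (hXeq n ▸ hzX : z ∈ C n ∩ D n)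
      have hz2 : z ∈ nbhdSet G (T2 n) := (hT2c n).2.symm ▸ (hXeq n ▸ hzX : z ∈ C n ∩ D n)
      obtain ⟨_, u1, hu1, hadj1⟩ := hz1
      obtain ⟨_, u2, hu2, hadj2⟩ := hz2
      obtain ⟨W1, hW1⟩ := connected_walk (hT1c n).1.2.2.1 hn1.1 hu1
      obtain ⟨W2, hW2⟩ := connected_walk (hT2c n).1.2.2.1 hn1.2 hu2
      have hT1Y : ∀ w ∈ T1 n, w ∉ Y :=
        fun w hw hwY => (hT1c n).1.2.1 hw (hXeq n ▸ hn2 w hwY)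
      have hT2Y : ∀ w ∈ T2 n, w ∉ Y :=
        fun w hw hwY => (hT2c n).1.2.1 hw (hXeq n ▸ hn2 w hwY)
      refine hreach ⟨(W1.append (SimpleGraph.Walk.cons hadj1 SimpleGraph.Walk.nil)).append
        ((W2.append (SimpleGraph.Walk.cons hadj2 SimpleGraph.Walk.nil)).reverse), ?_⟩
      intro w hw
      rw [SimpleGraph.Walk.mem_support_append_iff] at hw
      rcases hw with hw | hw
      · rw [SimpleGraph.Walk.mem_support_append_iff] at hw
        rcases hw with hw | hw
        · exact hT1Y w (hW1 w hw)
        · simp only [SimpleGraph.Walk.support_cons, SimpleGraph.Walk.support_nil,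
            List.mem_cons, List.mem_singleton] at hw
          rcases hw with rfl | hw
          · exact hT1Y w hu1
          · rcases hw with rfl | h
            · exact hzY
            · exact absurd h List.not_mem_nil
      · rw [SimpleGraph.Walk.support_reverse, List.mem_reverse,
          SimpleGraph.Walk.mem_support_append_iff] at hw
        rcases hw with hw | hw
        · exact hT2Y w (hW2 w hw)
        · simp only [SimpleGraph.Walk.support_cons, SimpleGraph.Walk.support_nil,
            List.mem_cons, List.mem_singleton] at hw
          rcases hw with rfl | hw
          · exact hT2Y w hu2
          · rcases hw with rfl | h
            · exact hzY
            · exact absurd h List.not_mem_nil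

end Statement5Aux

/-- In a locally finite connected graph, every tight
separation of finite order is crossed by only finitely many tight separations
of order at most `k`. -/
theorem statement5 {V : Type*} (G : SimpleGraph V)
    (hlf : ∀ v : V, (G.neighborSet v).Finite) (hG : G.Connected)
    (k : ℕ) (A B : Set V)
    (hAB : IsSep G A B) (ht : TightSep G A B) (hfin : (A ∩ B).Finite) :
    {t : Set V × Set V | IsSep G t.1 t.2 ∧ TightSep G t.1 t.2 ∧
      (t.1 ∩ t.2).encard ≤ (k : ℕ∞) ∧ Crosses (A, B) t}.Finite := by
  classical
  have hsepfin := separators_finite G hlf hG k A B hAB ht hfin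
  have hsubset : {t : Set V × Set V | IsSep G t.1 t.2 ∧ TightSep G t.1 t.2 ∧
      (t.1 ∩ t.2).encard ≤ (k : ℕ∞) ∧ Crosses (A, B) t} ⊆
      ⋃ X ∈ {X : Set V | ∃ C D : Set V, IsSep G C D ∧ TightSep G C D ∧
        (C ∩ D).encard ≤ (k : ℕ∞) ∧ Crosses (A, B) (C, D) ∧ C ∩ D = X},
        {t : Set V × Set V | IsSep G t.1 t.2 ∧ t.1 ∩ t.2 = X} := by
    rintro ⟨C, D⟩ ⟨h1, h2, h3, h4⟩
    exact Set.mem_biUnion ⟨C, D, h1, h2, h3, h4, rfl⟩ ⟨h1, rfl⟩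
  apply Set.Finite.subset _ hsubset
  apply Set.Finite.biUnion hsepfin
  rintro X ⟨C, D, h1, h2, h3, h4, h5⟩
  exact fiber_finite hG hlf (h5 ▸ Set.finite_of_encard_le_coe h3)
    (h5 ▸ tightSep_sep_nonempty hG h2)

end LS
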